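/- Let q ∈ (0,1) and y ≥ 0 be real numbers with q·y < √(1 − q²), and let n ∈ ℝ be such that, in ℝ², the distance from the unit vector (n,1)/‖(n,1)‖ to the ray cone{(y,1)} is at most q. Then |n − y| ≤ q(y² + 1)/(√(1 − q²) − q·y). -/

import Mathlib

open Metric Set

noncomputable section

/-- `ℝ²` realized as the L²-product `ℝ × ℝ`. -/
abbrev R2 := WithLp 2 (ℝ × ℝ)

/-- The vector `(a, b) ∈ ℝ²`. -/
def vec2 (a b : ℝ) : R2 := (WithLp.equiv 2 (ℝ × ℝ)).symm (a, b)

/-- The ray `cone {v} = {λ • v : λ ≥ 0}`. -/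
def ray {V : Type*} [AddCommMonoid V] [Module ℝ V] (v : V) : Set V :=
  {x | ∃ l : ℝ, 0 ≤ l ∧ x = l • v}

lemma vec2_norm (a b : ℝ) : ‖vec2 a b‖ = Real.sqrt (a^2 + b^2) := by
  rw [show vec2 a b = WithLp.toLp 2 (a,b) from rfl, WithLp.prod_norm_eq_of_L2]
  simp [sq_abs]

lemma ray_nonempty {V : Type*} [AddCommMonoid V] [Module ℝ V] (v : V) :
    (ray v).Nonempty := ⟨0, 0, le_refl 0, by simp⟩

lemma le_infDist' {X : Type*} [MetricSpace X] {x : X} {s : Set X} (hs : s.Nonempty)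
    {m : ℝ} (h : ∀ z ∈ s, m ≤ dist x z) : m ≤ infDist x s := by
  by_contra hlt
  push_neg at hlt
  obtain ⟨z, hz, hd⟩ := (infDist_lt_iff hs).mp hlt
  exact absurd (h z hz) (not_le.mpr hd)

set_option maxHeartbeats 1600000 in
/-- If `q ∈ (0,1)`, `y ≥ 0` with `q·y < √(1 − q²)`, and the distance in `ℝ²` from the
unit vector `(n,1)/‖(n,1)‖` to the ray `cone{(y,1)}` is at most `q`, then
`|n − y| ≤ q(y² + 1)/(√(1 − q²) − q·y)`. -/
theorem planar_error_bound (q y : ℝ) (hq : q ∈ Set.Ioo (0:ℝ) 1) (hy : 0 ≤ y)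
    (hqy : q * y < Real.sqrt (1 - q ^ 2)) (n : ℝ)
    (hn : infDist (‖vec2 n 1‖⁻¹ • vec2 n 1) (ray (vec2 y 1)) ≤ q) :
    |n - y| ≤ q * (y ^ 2 + 1) / (Real.sqrt (1 - q ^ 2) - q * y) := by
  obtain ⟨hq0, hq1⟩ := hq
  set A : ℝ := Real.sqrt (n^2 + 1) with hAdef
  set B : ℝ := Real.sqrt (y^2 + 1) with hBdef
  set s : ℝ := Real.sqrt (1 - q^2) with hsdef
  have hA : 0 < A := Real.sqrt_pos.mpr (by positivity)
  have hB : 0 < B := Real.sqrt_pos.mpr (by positivity)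
  have hA2 : A^2 = n^2 + 1 := Real.sq_sqrt (by positivity)
  have hB2 : B^2 = y^2 + 1 := Real.sq_sqrt (by positivity)
  have hs2 : s^2 = 1 - q^2 := Real.sq_sqrt (by nlinarith)
  have hs0 : 0 ≤ s := Real.sqrt_nonneg _
  have hsy : 0 < s - q * y := by linarith
  have hnorm : ‖vec2 n 1‖ = A := by rw [vec2_norm, one_pow]
  set a : ℝ := A⁻¹ with hadef
  have ha : a * A = 1 := inv_mul_cancel₀ hA.ne'
  have ha0 : 0 < a := inv_pos.mpr hA
  have ha2 : a^2 * (n^2 + 1) = 1 := by rw [← hA2]; nlinarith [ha]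
  have ha2' : a^2 * (n^2 + 1) * (n - y)^2 = (n - y)^2 := by rw [ha2]; ring
  have hu : ‖vec2 n 1‖⁻¹ • vec2 n 1 = vec2 (a * n) (a * 1) := by
    rw [hnorm]; rfl
  have hAB : A * B = Real.sqrt ((n^2+1) * (y^2+1)) := by
    rw [hAdef, hBdef, ← Real.sqrt_mul (by positivity)]
  have hD : (0:ℝ) < (n^2+1) * (y^2+1) := by positivity
  -- distance from u to a point of the ray
  have hdist : ∀ l : ℝ, dist (‖vec2 n 1‖⁻¹ • vec2 n 1) (l • vec2 y 1)
      = Real.sqrt ((a*n - l*y)^2 + (a - l)^2) := by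
    intro l
    rw [hu, dist_eq_norm,
      show vec2 (a*n) (a*1) - l • vec2 y 1 = vec2 (a*n - l*y) (a*1 - l*1) from rfl,
      vec2_norm]
    norm_num
  clear_value a A B s
  -- Fact 1: |n - y| ≤ q * (A * B)
  have fact1 : |n - y| ≤ q * (A * B) := by
    have hlow : |n - y| / (A * B) ≤ infDist (‖vec2 n 1‖⁻¹ • vec2 n 1) (ray (vec2 y 1)) := by
      apply le_infDist' (ray_nonempty _)
      rintro z ⟨l, hl, rfl⟩
      rw [hdist l, div_le_iff₀ (mul_pos hA hB)]
      calc |n - y| = Real.sqrt ((n-y)^2) := (Real.sqrt_sq_eq_abs _).symm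
        _ ≤ Real.sqrt (((a*n - l*y)^2 + (a - l)^2) * ((n^2+1)*(y^2+1))) := by
            apply Real.sqrt_le_sqrt
            nlinarith [mul_nonneg (sq_nonneg ((a*n - l*y)*y + (a - l)))
              (show (0:ℝ) ≤ n^2+1 by positivity), ha2']
        _ = Real.sqrt ((a*n - l*y)^2 + (a - l)^2) * (A * B) := by
            rw [Real.sqrt_mul (by positivity), ← hAB]
    have h2 := hlow.trans hn
    rw [div_le_iff₀ (mul_pos hA hB)] at h2
    linarith [h2]
  -- Fact 2: s * (A * B) ≤ n * y + 1
  have fact2 : s * (A * B) ≤ n * y + 1 := by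
    by_cases hc : n * y + 1 ≤ 0
    · -- then every point of the ray is at distance ≥ 1, contradiction
      exfalso
      have hlow : (1:ℝ) ≤ infDist (‖vec2 n 1‖⁻¹ • vec2 n 1) (ray (vec2 y 1)) := by
        apply le_infDist' (ray_nonempty _)
        rintro z ⟨l, hl, rfl⟩
        rw [hdist l, show (1:ℝ) = Real.sqrt 1 from (Real.sqrt_one).symm]
        apply Real.sqrt_le_sqrt
        nlinarith [ha2, mul_nonneg (mul_nonneg hl ha0.le) (neg_nonneg.mpr hc),
          sq_nonneg (l*y), sq_nonneg l]
      linarith [hlow.trans hn]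
    · push_neg at hc
      set c : ℝ := n * y + 1 with hcdef
      have hCS : c^2 ≤ (n^2+1) * (y^2+1) := by nlinarith [sq_nonneg (n - y)]
      have hX : 0 ≤ 1 - c^2 / ((n^2+1) * (y^2+1)) := by
        rw [sub_nonneg, div_le_one hD]; exact hCS
      have hlow : Real.sqrt (1 - c^2 / ((n^2+1) * (y^2+1)))
          ≤ infDist (‖vec2 n 1‖⁻¹ • vec2 n 1) (ray (vec2 y 1)) := by
        apply le_infDist' (ray_nonempty _)
        rintro z ⟨l, hl, rfl⟩
        rw [hdist l]
        apply Real.sqrt_le_sqrt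
        have hpoly : (n^2+1) * (y^2+1) - c^2
            ≤ ((a*n - l*y)^2 + (a - l)^2) * ((n^2+1) * (y^2+1)) := by
          nlinarith [mul_nonneg (sq_nonneg ((a*n - l*y)*y + (a - l) - l*(y^2+1) + l*(y^2+1)))
            (show (0:ℝ) ≤ n^2+1 by positivity), ha2',
            mul_nonneg (sq_nonneg ((a*n - l*y)*y + (a - l))) (show (0:ℝ) ≤ n^2+1 by positivity)]
        calc 1 - c^2 / ((n^2+1) * (y^2+1))
            = ((n^2+1) * (y^2+1) - c^2) / ((n^2+1) * (y^2+1)) := by field_simp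
          _ ≤ ((a*n - l*y)^2 + (a - l)^2) := by
              rw [div_le_iff₀ hD]; exact hpoly
      have hle : Real.sqrt (1 - c^2 / ((n^2+1) * (y^2+1))) ≤ q := hlow.trans hn
      have hsq : 1 - c^2 / ((n^2+1) * (y^2+1)) ≤ q^2 := by
        calc 1 - c^2 / ((n^2+1) * (y^2+1))
            = (Real.sqrt (1 - c^2 / ((n^2+1) * (y^2+1))))^2 := (Real.sq_sqrt hX).symm
          _ ≤ q^2 := by
              apply pow_le_pow_left₀ (Real.sqrt_nonneg _) hle
      have hc2 : (1 - q^2) * ((n^2+1) * (y^2+1)) ≤ c^2 := by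
        have h' : 1 - q^2 ≤ c^2 / ((n^2+1) * (y^2+1)) := by linarith
        rw [le_div_iff₀ hD] at h'
        linarith
      have hAB2 : (A * B)^2 = (n^2+1) * (y^2+1) := by
        rw [mul_pow, hA2, hB2]
      nlinarith [hc2, hs2, hAB2, hc, mul_nonneg hs0 (mul_pos hA hB).le,
        mul_pos hA hB]
  -- combine
  have hnle : n ≤ y + q * (A * B) := by
    have := le_abs_self (n - y)
    linarith [fact1]
  have hA_le : (s - q * y) * A ≤ B := by
    have hny : n * y ≤ y^2 + q * (A * B) * y := by
      nlinarith [mul_le_mul_of_nonneg_right hnle hy]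
    nlinarith [fact2, hny, hB2, hB, mul_pos hA hB]
  rw [le_div_iff₀ hsy]
  calc |n - y| * (s - q * y) ≤ (q * (A * B)) * (s - q * y) := by
        apply mul_le_mul_of_nonneg_right fact1 hsy.le
    _ = (q * B) * ((s - q * y) * A) := by ring
    _ ≤ (q * B) * B := by
        apply mul_le_mul_of_nonneg_left hA_le (by positivity)
    _ = q * (y^2 + 1) := by rw [← hB2]; ring
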